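/- Let n ≥ 2 and α ∈ (0,1)^n with ∑ αᵢ = 1. Let ζ ∈ ℝⁿ with every ζᵢ < 0 and ∏ (-ζᵢ/αᵢ)^{αᵢ} = 1, and define ζ̃ᵢ = -αᵢ/ζᵢ. Then there exist constants C > 0 and ε > 0 such that -1 - ⟨ζ, ω⟩ ≥ C‖ω - ζ̃‖² whenever ω has all positive entries, ‖ω - ζ̃‖ ≤ ε, and ∏ ωᵢ^{αᵢ} = 1. -/

import Mathlib

open Finset

lemma log_one_add_le_quad (x : ℝ) (h1 : -1 < x) (h2 : x ≤ 1/2) :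
    Real.log (1 + x) ≤ x - x ^ 2 / 6 := by
  have hx : (0:ℝ) < 1 + x := by linarith
  set s := Real.sqrt (1 + x) with hsdef
  have hs0 : 0 < s := Real.sqrt_pos.mpr hx
  have hs2 : s ^ 2 = 1 + x := Real.sq_sqrt hx.le
  have hlog : Real.log (1 + x) ≤ 2 * (s - 1) := by
    have h := Real.log_le_sub_one_of_pos hs0
    have : Real.log (1 + x) = 2 * Real.log s := by
      rw [← hs2, Real.log_pow]; push_cast; ring
    linarith
  have hsle : s ≤ 5/4 := by nlinarith
  nlinarith [sq_nonneg (s - 1), mul_nonneg (sq_nonneg (s - 1)) (show (0:ℝ) ≤ 6 - (s+1)^2 by nlinarith)]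

/-- Local quadratic growth: `-1 - ⟨ζ, ω⟩ ≥ C ‖ω - ζ̃‖²` near `ζ̃` on the set
`{ω > 0 : ∏ ωᵢ^{αᵢ} = 1}`. -/
theorem power_cone_quadratic_growth (n : ℕ) (hn : 2 ≤ n) (α : Fin n → ℝ)
    (ζ ζt : EuclideanSpace ℝ (Fin n))
    (hα : ∀ i, 0 < α i ∧ α i < 1) (hαsum : ∑ i, α i = 1)
    (hζ : ∀ i, ζ i < 0) (hζprod : ∏ i, (-ζ i / α i) ^ α i = 1)
    (hζt : ∀ i, ζt i = -α i / ζ i) :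
    ∃ C : ℝ, 0 < C ∧ ∃ ε : ℝ, 0 < ε ∧
      ∀ ω : EuclideanSpace ℝ (Fin n), (∀ i, 0 < ω i) → ‖ω - ζt‖ ≤ ε →
        ∏ i, ω i ^ α i = 1 →
        C * ‖ω - ζt‖ ^ 2 ≤ -1 - ∑ i, ζ i * ω i := by
  haveI : NeZero n := ⟨by omega⟩
  have hne : (Finset.univ : Finset (Fin n)).Nonempty := Finset.univ_nonempty
  have hζne : ∀ i, ζ i ≠ 0 := fun i => (hζ i).ne
  have hαpos : ∀ i, 0 < α i := fun i => (hα i).1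
  have hζtpos : ∀ i, 0 < ζt i := fun i => by
    rw [hζt i]; exact div_pos_of_neg_of_neg (by linarith [hαpos i]) (hζ i)
  -- ζ i * ζt i = -α i
  have hζζt : ∀ i, ζ i * ζt i = -α i := fun i => by
    rw [hζt i]; field_simp [hζne i]
  -- α i / ζt i = -ζ i
  have hαζt : ∀ i, α i / ζt i = -ζ i := fun i => by
    rw [hζt i]; field_simp [hζne i, (hαpos i).ne']
  -- inverse relation
  have hinv : ∀ i, -ζ i / α i = (ζt i)⁻¹ := fun i => by
    rw [hζt i, inv_div, div_neg, neg_div]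
  set m := Finset.univ.inf' hne (fun i => ζt i) with hm
  have hmpos : 0 < m := (Finset.lt_inf'_iff hne).mpr (fun i _ => hζtpos i)
  have hmle : ∀ i, m ≤ ζt i := fun i => Finset.inf'_le _ (Finset.mem_univ i)
  set c := Finset.univ.inf' hne (fun i => α i / ζt i ^ 2) with hc
  have hcpos : 0 < c := (Finset.lt_inf'_iff hne).mpr
    (fun i _ => div_pos (hαpos i) (pow_pos (hζtpos i) 2))
  have hcle : ∀ i, c ≤ α i / ζt i ^ 2 := fun i => Finset.inf'_le _ (Finset.mem_univ i)
  refine ⟨c / 6, by positivity, m / 2, by positivity, fun ω hω hωnear hωprod => ?_⟩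
  -- norm squared formula
  have hnorm : ‖ω - ζt‖ ^ 2 = ∑ i, (ω i - ζt i) ^ 2 := by
    rw [EuclideanSpace.norm_eq, Real.sq_sqrt (by positivity)]
    exact Finset.sum_congr rfl fun i _ => by
      simp [Real.norm_eq_abs, sq_abs]
  -- coordinatewise bound
  have hcoord : ∀ i, |ω i - ζt i| ≤ m / 2 := by
    intro i
    have h1 : (ω i - ζt i) ^ 2 ≤ ‖ω - ζt‖ ^ 2 := by
      rw [hnorm]
      exact Finset.single_le_sum (f := fun i => (ω i - ζt i) ^ 2)
        (fun i _ => sq_nonneg _) (Finset.mem_univ i)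
    have h2 : ‖ω - ζt‖ ^ 2 ≤ (m / 2) ^ 2 := by
      have := norm_nonneg (ω - ζt)
      nlinarith
    nlinarith [sq_abs (ω i - ζt i), abs_nonneg (ω i - ζt i)]
  -- log sums
  have hlogω : ∑ i, α i * Real.log (ω i) = 0 := by
    have h1 : ∑ i, Real.log (ω i ^ α i) = 0 := by
      rw [← Real.log_prod (fun i _ => (Real.rpow_pos_of_pos (hω i) _).ne'),
        hωprod, Real.log_one]
    rw [← h1]
    exact Finset.sum_congr rfl fun i _ => (Real.log_rpow (hω i) _).symm
  have hlogζt : ∑ i, α i * Real.log (ζt i) = 0 := by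
    have h1 : ∑ i, Real.log ((-ζ i / α i) ^ α i) = 0 := by
      rw [← Real.log_prod (fun i _ =>
        (Real.rpow_pos_of_pos (by rw [hinv i]; exact inv_pos.mpr (hζtpos i)) _).ne'),
        hζprod, Real.log_one]
    have h2 : ∀ i, Real.log ((-ζ i / α i) ^ α i) = -(α i * Real.log (ζt i)) := by
      intro i
      rw [Real.log_rpow (by rw [hinv i]; exact inv_pos.mpr (hζtpos i)), hinv i,
        Real.log_inv]; ring
    have h3 : ∑ i, -(α i * Real.log (ζt i)) = 0 := by
      rw [← h1]; exact Finset.sum_congr rfl fun i _ => (h2 i).symm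
    rw [Finset.sum_neg_distrib] at h3
    linarith
  -- pointwise quadratic bound
  have hkey : ∀ i, α i * (Real.log (ω i) - Real.log (ζt i)) ≤
      α i * ((ω i - ζt i) / ζt i) - α i * ((ω i - ζt i) / ζt i) ^ 2 / 6 := by
    intro i
    set x := (ω i - ζt i) / ζt i with hx
    have hx1 : -1 < x := by
      rw [hx]
      have : 0 < ω i / ζt i := div_pos (hω i) (hζtpos i)
      have hrw : (ω i - ζt i) / ζt i = ω i / ζt i - 1 := by
        rw [sub_div, div_self (hζtpos i).ne']
      rw [hrw]; linarith
    have hx2 : x ≤ 1/2 := by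
      rw [hx]
      have h1 : |ω i - ζt i| ≤ ζt i / 2 := le_trans (hcoord i) (by linarith [hmle i])
      have h2 : ω i - ζt i ≤ ζt i / 2 := le_trans (le_abs_self _) h1
      rw [div_le_iff₀ (hζtpos i)]
      linarith
    have h3 : Real.log (1 + x) ≤ x - x ^ 2 / 6 := log_one_add_le_quad x hx1 hx2
    have h4 : Real.log (ω i) - Real.log (ζt i) = Real.log (1 + x) := by
      rw [← Real.log_div (hω i).ne' (hζtpos i).ne']
      rw [hx, sub_div, div_self (hζtpos i).ne']
      ring_nf
    rw [h4]
    have := hαpos i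
    nlinarith
  -- sum everything
  have hsum : 0 ≤ ∑ i, (α i * ((ω i - ζt i) / ζt i)
      - α i * ((ω i - ζt i) / ζt i) ^ 2 / 6) := by
    have h1 : ∑ i, α i * (Real.log (ω i) - Real.log (ζt i)) = 0 := by
      rw [Finset.sum_congr rfl (fun i _ => mul_sub (α i) _ _), Finset.sum_sub_distrib,
        hlogω, hlogζt]; ring
    calc (0:ℝ) = ∑ i, α i * (Real.log (ω i) - Real.log (ζt i)) := h1.symm
      _ ≤ _ := Finset.sum_le_sum fun i _ => hkey i
  -- identify the linear part
  have hlin : ∑ i, α i * ((ω i - ζt i) / ζt i) = -1 - ∑ i, ζ i * ω i := by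
    have h1 : ∀ i, α i * ((ω i - ζt i) / ζt i) = -(ζ i * ω i) - α i := by
      intro i
      have e1 := hαζt i
      have e2 := hζζt i
      calc α i * ((ω i - ζt i) / ζt i) = (α i / ζt i) * (ω i - ζt i) := by ring
        _ = -ζ i * (ω i - ζt i) := by rw [e1]
        _ = -(ζ i * ω i) - α i := by linear_combination e2
    rw [Finset.sum_congr rfl fun i _ => h1 i, Finset.sum_sub_distrib,
      Finset.sum_neg_distrib, hαsum]
    ring
  -- quadratic part lower bound
  have hquad : c * ∑ i, (ω i - ζt i) ^ 2 ≤ ∑ i, α i * ((ω i - ζt i) / ζt i) ^ 2 := by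
    rw [Finset.mul_sum]
    refine Finset.sum_le_sum fun i _ => ?_
    have h1 : α i * ((ω i - ζt i) / ζt i) ^ 2 = (α i / ζt i ^ 2) * (ω i - ζt i) ^ 2 := by
      field_simp
    rw [h1]
    exact mul_le_mul_of_nonneg_right (hcle i) (sq_nonneg _)
  rw [Finset.sum_sub_distrib] at hsum
  rw [hnorm]
  have h6 : ∑ i, α i * ((ω i - ζt i) / ζt i) ^ 2 / 6
      = (∑ i, α i * ((ω i - ζt i) / ζt i) ^ 2) / 6 := by
    rw [Finset.sum_div]
  rw [h6] at hsum
  linarith
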